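/- Let θ > 0 and m a natural number. Then the series Σ_{k=m+1}^{∞} |J_k(θ)| converges, and for every real y with |y| ≤ θ the truncated Chebyshev expansion satisfies | P^C_{m,θ}(y) − e^{−i y} | ≤ 2 Σ_{k=m+1}^{∞} |J_k(θ)|. -/

import Mathlib

/-- The Bessel function of the first kind of integer order `k`:
`J_k(θ) = (1/π) ∫_0^π cos(kτ - θ sin τ) dτ`. -/
noncomputable def besselJ (k : ℕ) (θ : ℝ) : ℝ :=
  (1 / Real.pi) * ∫ τ in (0 : ℝ)..Real.pi, Real.cos (k * τ - θ * Real.sin τ)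

lemma besselJ_abs_le_one (k : ℕ) (θ : ℝ) : |besselJ k θ| ≤ 1 := by
  have h : ‖∫ τ in (0 : ℝ)..Real.pi, Real.cos (k * τ - θ * Real.sin τ)‖ ≤ 1 * |Real.pi - 0| := by
    apply intervalIntegral.norm_integral_le_of_norm_le_const
    intro x _
    simpa using Real.abs_cos_le_one _
  rw [Real.norm_eq_abs, sub_zero, abs_of_pos Real.pi_pos, one_mul] at h
  rw [besselJ, abs_mul, abs_of_pos (by positivity : (0:ℝ) < 1 / Real.pi)]
  calc 1 / Real.pi * |_| ≤ 1 / Real.pi * Real.pi := by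
        exact mul_le_mul_of_nonneg_left h (by positivity)
    _ = 1 := by field_simp

lemma deriv_int (k : ℕ) (θ : ℝ) :
    ∫ τ in (0:ℝ)..Real.pi, (k - θ * Real.cos τ) * Real.cos (k * τ - θ * Real.sin τ) = 0 := by
  have h : ∀ τ ∈ Set.uIcc (0:ℝ) Real.pi, HasDerivAt (fun t => Real.sin (k * t - θ * Real.sin t))
      ((k - θ * Real.cos τ) * Real.cos (k * τ - θ * Real.sin τ)) τ := by
    intro τ _
    have h1 : HasDerivAt (fun t : ℝ => (k : ℝ) * t - θ * Real.sin t) (k - θ * Real.cos τ) τ := by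
      exact (((hasDerivAt_id τ).const_mul (k:ℝ)).sub ((Real.hasDerivAt_sin τ).const_mul θ)).congr_deriv (by simp)
    exact ((Real.hasDerivAt_sin _).comp τ h1).congr_deriv (by ring)
  have hc : ContinuousOn (fun τ : ℝ => (k - θ * Real.cos τ) * Real.cos (k * τ - θ * Real.sin τ))
      (Set.uIcc 0 Real.pi) := by fun_prop
  rw [intervalIntegral.integral_eq_sub_of_hasDerivAt h (hc.intervalIntegrable)]
  simp [Real.sin_nat_mul_pi]

lemma besselJ_rec (k : ℕ) (θ : ℝ) (hθ : θ ≠ 0) :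
    besselJ k θ + besselJ (k + 2) θ = (2 * (k + 1) / θ) * besselJ (k + 1) θ := by
  have key : (∫ τ in (0:ℝ)..Real.pi, Real.cos (k * τ - θ * Real.sin τ))
      + (∫ τ in (0:ℝ)..Real.pi, Real.cos ((k + 2 : ℕ) * τ - θ * Real.sin τ))
      = (2 * (k + 1) / θ) * ∫ τ in (0:ℝ)..Real.pi, Real.cos ((k + 1 : ℕ) * τ - θ * Real.sin τ) := by
    have hC : (∫ τ in (0:ℝ)..Real.pi,
        Real.cos τ * Real.cos ((k + 1 : ℕ) * τ - θ * Real.sin τ))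
        = ((k + 1 : ℝ) / θ) * ∫ τ in (0:ℝ)..Real.pi, Real.cos ((k + 1 : ℕ) * τ - θ * Real.sin τ) := by
      have h0 := deriv_int (k + 1) θ
      have hsplit : ∀ τ : ℝ, ((k + 1 : ℕ) - θ * Real.cos τ) * Real.cos ((k + 1 : ℕ) * τ - θ * Real.sin τ)
          = ((k : ℝ) + 1) * Real.cos ((k + 1 : ℕ) * τ - θ * Real.sin τ)
            - θ * (Real.cos τ * Real.cos ((k + 1 : ℕ) * τ - θ * Real.sin τ)) := by
        intro τ; push_cast; ring
      rw [intervalIntegral.integral_congr (fun τ _ => hsplit τ)] at h0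
      rw [intervalIntegral.integral_sub ((by fun_prop : Continuous _).intervalIntegrable _ _) ((by fun_prop : Continuous _).intervalIntegrable _ _),
        intervalIntegral.integral_const_mul, intervalIntegral.integral_const_mul] at h0
      push_cast at h0 ⊢
      field_simp
      linarith
    rw [← intervalIntegral.integral_add ((by fun_prop : Continuous _).intervalIntegrable _ _) ((by fun_prop : Continuous _).intervalIntegrable _ _)]
    have hpt : ∀ τ : ℝ, Real.cos (k * τ - θ * Real.sin τ) + Real.cos ((k + 2 : ℕ) * τ - θ * Real.sin τ)
        = 2 * (Real.cos τ * Real.cos ((k + 1 : ℕ) * τ - θ * Real.sin τ)) := by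
      intro τ
      have h1 : (k : ℝ) * τ - θ * Real.sin τ = ((k + 1 : ℕ) * τ - θ * Real.sin τ) - τ := by push_cast; ring
      have h2 : ((k + 2 : ℕ) : ℝ) * τ - θ * Real.sin τ = ((k + 1 : ℕ) * τ - θ * Real.sin τ) + τ := by push_cast; ring
      rw [h1, h2, Real.cos_sub, Real.cos_add]; ring
    rw [intervalIntegral.integral_congr (fun τ _ => hpt τ), intervalIntegral.integral_const_mul, hC]
    ring
  simp only [besselJ]
  rw [← mul_add, key]
  ring

lemma besselJ_bound1 (k : ℕ) (θ : ℝ) (hθ : 0 < θ) :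
    |besselJ (k + 1) θ| ≤ θ / (k + 1) := by
  have h := besselJ_rec k θ hθ.ne'
  have hk : (0:ℝ) < k + 1 := by positivity
  have heq : besselJ (k + 1) θ = θ / (2 * (k + 1)) * (besselJ k θ + besselJ (k + 2) θ) := by
    rw [h]; field_simp
  rw [heq, abs_mul, abs_of_pos (by positivity : (0:ℝ) < θ / (2 * (k + 1)))]
  have habs : |besselJ k θ + besselJ (k + 2) θ| ≤ 2 :=
    (abs_add_le _ _).trans (by linarith [besselJ_abs_le_one k θ, besselJ_abs_le_one (k+2) θ])
  calc θ / (2 * (k + 1)) * |besselJ k θ + besselJ (k + 2) θ|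
      ≤ θ / (2 * (k + 1)) * 2 := by apply mul_le_mul_of_nonneg_left habs; positivity
    _ = θ / (k + 1) := by field_simp

lemma besselJ_bound2 (k : ℕ) (θ : ℝ) (hθ : 0 < θ) :
    |besselJ (k + 2) θ| ≤ θ ^ 2 * (1 / (k + 1) ^ 2) := by
  have h := besselJ_rec (k + 1) θ hθ.ne'
  have hk1 : (0:ℝ) < (k:ℝ) + 1 := by positivity
  have hk2 : (0:ℝ) < (k:ℝ) + 2 := by positivity
  have hk3 : (0:ℝ) < (k:ℝ) + 3 := by positivity
  push_cast at h
  have h' : besselJ (k + 1) θ + besselJ (k + 3) θ = 2 * ((k:ℝ) + 2) / θ * besselJ (k + 2) θ := by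
    have e1 : k + 1 + 2 = k + 3 := rfl
    have e2 : k + 1 + 1 = k + 2 := rfl
    rw [e1, e2] at h
    linear_combination h
  have heq : besselJ (k + 2) θ = θ / (2 * ((k:ℝ) + 2)) * (besselJ (k + 1) θ + besselJ (k + 3) θ) := by
    rw [h']; field_simp
  rw [heq, abs_mul, abs_of_pos (by positivity : (0:ℝ) < θ / (2 * ((k:ℝ) + 2)))]
  have h1 := besselJ_bound1 k θ hθ
  have h2 := besselJ_bound1 (k + 2) θ hθ
  push_cast at h1 h2
  have e3 : ((k:ℝ) + 2 + 1) = (k:ℝ) + 3 := by ring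
  rw [e3] at h2
  have habs : |besselJ (k + 1) θ + besselJ (k + 3) θ| ≤ θ / ((k:ℝ) + 1) + θ / ((k:ℝ) + 3) :=
    (abs_add_le _ _).trans (by linarith)
  have hmono : θ / ((k:ℝ) + 3) ≤ θ / ((k:ℝ) + 1) :=
    div_le_div_of_nonneg_left hθ.le hk1 (by linarith)
  calc θ / (2 * ((k:ℝ) + 2)) * |besselJ (k + 1) θ + besselJ (k + 3) θ|
      ≤ θ / (2 * ((k:ℝ) + 2)) * (2 * (θ / ((k:ℝ) + 1))) := by
        apply mul_le_mul_of_nonneg_left _ (by positivity)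
        linarith
    _ = θ ^ 2 / (((k:ℝ) + 1) * ((k:ℝ) + 2)) := by field_simp
    _ ≤ θ ^ 2 / (((k:ℝ) + 1) ^ 2) := by
        apply div_le_div_of_nonneg_left (by positivity) (by positivity)
        nlinarith
    _ = θ ^ 2 * (1 / ((k:ℝ) + 1) ^ 2) := by ring

lemma besselJ_summable (θ : ℝ) (hθ : 0 < θ) : Summable (fun k : ℕ => |besselJ k θ|) := by
  rw [← summable_nat_add_iff 2]
  apply Summable.of_nonneg_of_le (fun k => abs_nonneg _) (fun k => besselJ_bound2 k θ hθ)
  apply Summable.mul_left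
  have h : Summable (fun n : ℕ => 1 / ((n:ℝ)) ^ 2) := by
    simpa using Real.summable_one_div_nat_pow.mpr (by norm_num : 1 < 2)
  have := (summable_nat_add_iff 1).mpr h
  simpa using this

lemma besselJ_summable_shift (θ : ℝ) (hθ : 0 < θ) (m : ℕ) :
    Summable (fun k : ℕ => |besselJ (m + 1 + k) θ|) := by
  have := (summable_nat_add_iff (m + 1)).mpr (besselJ_summable θ hθ)
  apply this.congr
  intro k; simp [Nat.add_comm]

open intervalIntegral in
lemma odd_int_zero (a θ : ℝ) :
    ∫ τ in (-Real.pi)..Real.pi, Real.sin (θ * Real.sin τ - a * τ) = 0 := by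
  have hint : ∀ u v : ℝ, IntervalIntegrable (fun τ => Real.sin (θ * Real.sin τ - a * τ))
      MeasureTheory.volume u v := fun u v => (by fun_prop : Continuous _).intervalIntegrable _ _
  have hsplit := integral_add_adjacent_intervals (μ := MeasureTheory.volume)
    (a := -Real.pi) (b := 0) (c := Real.pi) (hint _ _) (hint _ _)
  have hneg : (∫ τ in (-Real.pi)..(0:ℝ), Real.sin (θ * Real.sin τ - a * τ))
      = - ∫ τ in (0:ℝ)..Real.pi, Real.sin (θ * Real.sin τ - a * τ) := by
    have h1 : (∫ τ in (0:ℝ)..Real.pi, Real.sin (θ * Real.sin (-τ) - a * (-τ)))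
        = ∫ τ in (-Real.pi)..(0:ℝ), Real.sin (θ * Real.sin τ - a * τ) := by
      simpa using integral_comp_neg (a := (0:ℝ)) (b := Real.pi)
        (fun τ => Real.sin (θ * Real.sin τ - a * τ))
    rw [← h1, ← integral_neg]
    apply integral_congr
    intro x _
    show Real.sin (θ * Real.sin (-x) - a * (-x)) = -Real.sin (θ * Real.sin x - a * x)
    rw [Real.sin_neg, show θ * -Real.sin x - a * -x = -(θ * Real.sin x - a * x) by ring,
      Real.sin_neg]
  linarith [hsplit, hneg]

open intervalIntegral in
lemma even_int (a θ : ℝ) :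
    ∫ τ in (-Real.pi)..Real.pi, Real.cos (a * τ - θ * Real.sin τ)
      = 2 * ∫ τ in (0:ℝ)..Real.pi, Real.cos (a * τ - θ * Real.sin τ) := by
  have hint : ∀ u v : ℝ, IntervalIntegrable (fun τ => Real.cos (a * τ - θ * Real.sin τ))
      MeasureTheory.volume u v := fun u v => (by fun_prop : Continuous _).intervalIntegrable _ _
  have hsplit := integral_add_adjacent_intervals (μ := MeasureTheory.volume)
    (a := -Real.pi) (b := 0) (c := Real.pi) (hint _ _) (hint _ _)
  have hneg : (∫ τ in (-Real.pi)..(0:ℝ), Real.cos (a * τ - θ * Real.sin τ))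
      = ∫ τ in (0:ℝ)..Real.pi, Real.cos (a * τ - θ * Real.sin τ) := by
    have h1 : (∫ τ in (0:ℝ)..Real.pi, Real.cos (a * (-τ) - θ * Real.sin (-τ)))
        = ∫ τ in (-Real.pi)..(0:ℝ), Real.cos (a * τ - θ * Real.sin τ) := by
      simpa using integral_comp_neg (a := (0:ℝ)) (b := Real.pi)
        (fun τ => Real.cos (a * τ - θ * Real.sin τ))
    rw [← h1]
    apply integral_congr
    intro x _
    show Real.cos (a * (-x) - θ * Real.sin (-x)) = Real.cos (a * x - θ * Real.sin x)
    rw [Real.sin_neg, show a * -x - θ * -Real.sin x = -(a * x - θ * Real.sin x) by ring,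
      Real.cos_neg]
  linarith [hsplit, hneg]

open intervalIntegral in
lemma neg_index_int (k : ℕ) (θ : ℝ) :
    ∫ τ in (0:ℝ)..Real.pi, Real.cos (-(k:ℝ) * τ - θ * Real.sin τ)
      = (-1:ℝ)^k * ∫ τ in (0:ℝ)..Real.pi, Real.cos ((k:ℝ) * τ - θ * Real.sin τ) := by
  have h1 : (∫ τ in (0:ℝ)..Real.pi, Real.cos (-(k:ℝ) * (Real.pi - τ) - θ * Real.sin (Real.pi - τ)))
      = ∫ τ in (0:ℝ)..Real.pi, Real.cos (-(k:ℝ) * τ - θ * Real.sin τ) := by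
    simpa using integral_comp_sub_left (a := (0:ℝ)) (b := Real.pi)
      (fun τ => Real.cos (-(k:ℝ) * τ - θ * Real.sin τ)) Real.pi
  rw [← h1, ← integral_const_mul]
  apply integral_congr
  intro x _
  show Real.cos (-(k:ℝ) * (Real.pi - x) - θ * Real.sin (Real.pi - x))
      = (-1:ℝ)^k * Real.cos ((k:ℝ) * x - θ * Real.sin x)
  rw [Real.sin_pi_sub,
    show -(k:ℝ) * (Real.pi - x) - θ * Real.sin x
      = -((k:ℝ) * Real.pi - ((k:ℝ) * x - θ * Real.sin x)) by ring,
    Real.cos_neg, Real.cos_nat_mul_pi_sub]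

noncomputable def besselF (θ : ℝ) : ℝ → ℂ :=
  fun t => Complex.exp (-Complex.I * ((θ * Real.cos t : ℝ) : ℂ))

lemma besselF_periodic (θ : ℝ) : Function.Periodic (besselF θ) (2 * Real.pi) := by
  intro x
  simp [besselF, Real.cos_add_two_pi]

lemma besselF_continuous (θ : ℝ) : Continuous (besselF θ) := by
  unfold besselF; fun_prop

noncomputable def besselMap (θ : ℝ) : C(AddCircle (2 * Real.pi), ℂ) :=
  ⟨(besselF_periodic θ).lift, (besselF_continuous θ).quotient_liftOn' _⟩

instance : Fact (0 < 2 * Real.pi) := ⟨by positivity⟩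

open intervalIntegral in
lemma complex_to_real_int (a θ : ℝ) :
    (∫ τ in (-Real.pi)..Real.pi, Complex.exp (((θ * Real.sin τ - a * τ : ℝ) : ℂ) * Complex.I))
      = ((2 * ∫ τ in (0:ℝ)..Real.pi, Real.cos (a * τ - θ * Real.sin τ) : ℝ) : ℂ) := by
  have h1 : ∀ τ : ℝ, Complex.exp (((θ * Real.sin τ - a * τ : ℝ) : ℂ) * Complex.I)
      = ((Real.cos (a * τ - θ * Real.sin τ) : ℝ) : ℂ)
        + ((Real.sin (θ * Real.sin τ - a * τ) : ℝ) : ℂ) * Complex.I := by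
    intro τ
    rw [Complex.exp_mul_I, ← Complex.ofReal_cos, ← Complex.ofReal_sin,
      show θ * Real.sin τ - a * τ = -(a * τ - θ * Real.sin τ) by ring, Real.cos_neg,
      Real.sin_neg]
  rw [integral_congr (fun τ _ => h1 τ), integral_add
    ((by fun_prop : Continuous fun τ : ℝ =>
      ((Real.cos (a * τ - θ * Real.sin τ) : ℝ) : ℂ)).intervalIntegrable _ _)
    ((by fun_prop : Continuous fun τ : ℝ =>
      ((Real.sin (θ * Real.sin τ - a * τ) : ℝ) : ℂ) * Complex.I).intervalIntegrable _ _),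
    integral_mul_const, integral_ofReal, integral_ofReal, odd_int_zero, even_int]
  simp

lemma exp_neg_k_pi_div_two (k : ℕ) :
    Complex.exp (((-(k:ℝ) * (Real.pi/2) : ℝ) : ℂ) * Complex.I) = (-Complex.I) ^ k := by
  have h : (((-(k:ℝ) * (Real.pi/2) : ℝ) : ℂ) * Complex.I)
      = k * ((((-(Real.pi/2)) : ℝ) : ℂ) * Complex.I) := by push_cast; ring
  rw [h, Complex.exp_nat_mul]
  congr 1
  rw [Complex.exp_mul_I, ← Complex.ofReal_cos, ← Complex.ofReal_sin]
  simp [Real.cos_pi_div_two, Real.sin_pi_div_two]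

lemma exp_pos_k_pi_div_two (k : ℕ) :
    Complex.exp ((((k:ℝ) * (Real.pi/2) : ℝ) : ℂ) * Complex.I) = Complex.I ^ k := by
  have h : ((((k:ℝ) * (Real.pi/2) : ℝ) : ℂ) * Complex.I)
      = k * ((((Real.pi/2) : ℝ) : ℂ) * Complex.I) := by push_cast; ring
  rw [h, Complex.exp_nat_mul]
  congr 1
  rw [Complex.exp_mul_I, ← Complex.ofReal_cos, ← Complex.ofReal_sin]
  simp [Real.cos_pi_div_two, Real.sin_pi_div_two]

open intervalIntegral in
lemma fourierCoeff_besselMap (θ : ℝ) (n : ℤ) :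
    fourierCoeff (⇑(besselMap θ)) n
      = (-Complex.I) ^ n.natAbs * ((besselJ n.natAbs θ : ℝ) : ℂ) := by
  have hπ : Real.pi ≠ 0 := Real.pi_ne_zero
  have hπC : ((Real.pi : ℂ)) ≠ 0 := Complex.ofReal_ne_zero.mpr hπ
  rw [fourierCoeff_eq_intervalIntegral _ n (-(Real.pi/2))]
  have hint1 : ∀ x : ℝ,
      (fourier (-n) (x : AddCircle (2*Real.pi))) • (besselMap θ) (x : AddCircle (2*Real.pi))
      = Complex.exp (((-(n:ℝ) * x - θ * Real.cos x : ℝ) : ℂ) * Complex.I) := by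
    intro x
    rw [fourier_coe_apply, smul_eq_mul]
    show _ * besselF θ x = _
    rw [besselF, ← Complex.exp_add]
    congr 1
    push_cast
    field_simp
    ring
  rw [integral_congr (fun x _ => hint1 x)]
  have hsub : (∫ x in (-(Real.pi/2))..(-(Real.pi/2) + 2*Real.pi),
        Complex.exp (((-(n:ℝ) * x - θ * Real.cos x : ℝ) : ℂ) * Complex.I))
      = ∫ x in (-Real.pi)..Real.pi,
        Complex.exp (((-(n:ℝ) * (x + Real.pi/2) - θ * Real.cos (x + Real.pi/2) : ℝ) : ℂ)
          * Complex.I) := by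
    rw [integral_comp_add_right
      (fun x => Complex.exp (((-(n:ℝ) * x - θ * Real.cos x : ℝ) : ℂ) * Complex.I)) (Real.pi/2)]
    congr 1 <;> ring
  have hpt : ∀ x : ℝ,
      Complex.exp (((-(n:ℝ) * (x + Real.pi/2) - θ * Real.cos (x + Real.pi/2) : ℝ) : ℂ)
          * Complex.I)
      = Complex.exp (((-(n:ℝ) * (Real.pi/2) : ℝ) : ℂ) * Complex.I)
        * Complex.exp (((θ * Real.sin x - (n:ℝ) * x : ℝ) : ℂ) * Complex.I) := by
    intro x
    rw [← Complex.exp_add, Real.cos_add_pi_div_two]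
    congr 1
    push_cast
    ring
  rw [hsub, integral_congr (fun x _ => hpt x), integral_const_mul,
    complex_to_real_int (n:ℝ) θ]
  rcases Int.natAbs_eq n with h | h
  · set k := n.natAbs with hk
    have hn : (n : ℝ) = (k : ℝ) := by exact_mod_cast congrArg (Int.cast : ℤ → ℝ) h
    rw [hn, exp_neg_k_pi_div_two]
    have hJ : (∫ τ in (0:ℝ)..Real.pi, Real.cos ((k:ℝ) * τ - θ * Real.sin τ))
        = Real.pi * besselJ k θ := by
      rw [besselJ]; field_simp
    rw [hJ, Complex.real_smul]
    push_cast
    field_simp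
  · set k := n.natAbs with hk
    have hn : (n : ℝ) = -(k : ℝ) := by exact_mod_cast congrArg (Int.cast : ℤ → ℝ) h
    rw [hn]
    rw [show (-(-(k:ℝ)) * (Real.pi/2) : ℝ) = ((k:ℝ) * (Real.pi/2) : ℝ) by ring,
      exp_pos_k_pi_div_two]
    have hJ : (∫ τ in (0:ℝ)..Real.pi, Real.cos (-(k:ℝ) * τ - θ * Real.sin τ))
        = (-1:ℝ)^k * (Real.pi * besselJ k θ) := by
      rw [neg_index_int, besselJ]; field_simp
    rw [hJ, Complex.real_smul]
    rw [show (-Complex.I) = (-1) * Complex.I by ring, mul_pow]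
    push_cast
    field_simp

lemma coeff_summable (θ : ℝ) (hθ : 0 < θ) : Summable (fourierCoeff (⇑(besselMap θ))) := by
  apply Summable.of_norm
  have hnorm : ∀ n : ℤ, ‖fourierCoeff (⇑(besselMap θ)) n‖ = |besselJ n.natAbs θ| := by
    intro n
    rw [fourierCoeff_besselMap, norm_mul, norm_pow, norm_neg, Complex.norm_I, one_pow, one_mul,
      Complex.norm_real, Real.norm_eq_abs]
  rw [summable_congr hnorm]
  apply Summable.of_nat_of_neg_add_one
  · simpa using besselJ_summable θ hθ
  · have := besselJ_summable_shift θ hθ 0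
    apply this.congr
    intro k
    have hn : ((-(↑k + 1) : ℤ)).natAbs = 0 + 1 + k := by omega
    rw [hn]

lemma fourier_pair (n : ℕ) (φ : ℝ) :
    (fourier (n:ℤ) (φ : AddCircle (2*Real.pi)) : ℂ)
        + fourier (-(n:ℤ)) (φ : AddCircle (2*Real.pi))
      = 2 * ((Real.cos (n * φ) : ℝ) : ℂ) := by
  have hπ : (Real.pi:ℂ) ≠ 0 := Complex.ofReal_ne_zero.mpr Real.pi_ne_zero
  rw [fourier_coe_apply, fourier_coe_apply]
  have e1 : 2 * (Real.pi:ℂ) * Complex.I * ((n:ℤ):ℂ) * (φ:ℂ) / ((2 * Real.pi : ℝ):ℂ)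
      = (((n * φ : ℝ)):ℂ) * Complex.I := by push_cast; field_simp
  have e2 : 2 * (Real.pi:ℂ) * Complex.I * ((-(n:ℤ) : ℤ):ℂ) * (φ:ℂ) / ((2 * Real.pi : ℝ):ℂ)
      = ((-(n * φ) : ℝ):ℂ) * Complex.I := by push_cast; field_simp
  rw [e1, e2, Complex.exp_mul_I, Complex.exp_mul_I,
    ← Complex.ofReal_cos, ← Complex.ofReal_sin, ← Complex.ofReal_cos, ← Complex.ofReal_sin,
    Real.cos_neg, Real.sin_neg]
  push_cast
  ring

lemma bessel_hasSum (θ : ℝ) (hθ : 0 < θ) (φ : ℝ) :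
    HasSum (fun n : ℕ => 2 * ((-Complex.I)^n * ((besselJ n θ : ℝ):ℂ)
        * ((Real.cos (n * φ) : ℝ) : ℂ)))
      (Complex.exp (-Complex.I * ((θ * Real.cos φ : ℝ) : ℂ))
        + ((besselJ 0 θ : ℝ) : ℂ)) := by
  have H := has_pointwise_sum_fourier_series_of_summable (coeff_summable θ hθ)
    (φ : AddCircle (2 * Real.pi))
  have H2 := H.nat_add_neg
  have hval : (besselMap θ) ((φ : ℝ) : AddCircle (2*Real.pi)) = besselF θ φ := rfl
  rw [hval] at H2
  have h0 : fourierCoeff (⇑(besselMap θ)) 0 • (fourier 0 ((φ : ℝ) : AddCircle (2*Real.pi)) : ℂ)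
      = ((besselJ 0 θ : ℝ) : ℂ) := by
    rw [fourierCoeff_besselMap, fourier_zero]
    simp
  rw [h0] at H2
  apply H2.congr_fun
  intro n
  rw [fourierCoeff_besselMap, fourierCoeff_besselMap]
  have hab1 : ((n:ℤ)).natAbs = n := Int.natAbs_natCast n
  have hab2 : (-(n:ℤ)).natAbs = n := by simp
  rw [hab1, hab2, smul_eq_mul, smul_eq_mul, ← mul_add, fourier_pair]
  ring

/-- For `θ > 0` and `m ∈ ℕ`, the series `Σ_{k=m+1}^∞ |J_k(θ)|` converges, and for all real
`y` with `|y| ≤ θ`, the truncated Chebyshev expansion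
`P^C_{m,θ}(y) = J_0(θ) + 2 Σ_{k=1}^m (-i)^k J_k(θ) T_k(y/θ)` satisfies
`|P^C_{m,θ}(y) - e^{-iy}| ≤ 2 Σ_{k=m+1}^∞ |J_k(θ)|`. -/
theorem chebyshev_truncation_error (θ : ℝ) (hθ : 0 < θ) (m : ℕ) :
    Summable (fun k : ℕ => |besselJ (m + 1 + k) θ|) ∧
      ∀ y : ℝ, |y| ≤ θ →
        ‖(((besselJ 0 θ : ℝ) : ℂ) +
                2 * ∑ k ∈ Finset.Icc 1 m,
                  (-Complex.I) ^ k * ((besselJ k θ : ℝ) : ℂ) *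
                    (((Polynomial.Chebyshev.T ℝ k).eval (y / θ) : ℝ) : ℂ)) -
              Complex.exp ((-Complex.I) * (y : ℂ))‖ ≤
          2 * ∑' k : ℕ, |besselJ (m + 1 + k) θ| := by
  refine ⟨besselJ_summable_shift θ hθ m, ?_⟩
  intro y hy
  set φ := Real.arccos (y / θ) with hφ
  rw [abs_le] at hy
  have h1 : -1 ≤ y / θ := by rw [le_div_iff₀ hθ]; linarith
  have h2 : y / θ ≤ 1 := by rw [div_le_iff₀ hθ]; linarith
  have hcos : Real.cos φ = y / θ := Real.cos_arccos h1 h2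
  have hycos : θ * Real.cos φ = y := by rw [hcos]; field_simp
  set h : ℕ → ℂ := fun n => 2 * ((-Complex.I)^n * ((besselJ n θ : ℝ):ℂ)
      * ((Real.cos (n * φ) : ℝ) : ℂ)) with hh
  set S : ℂ := Complex.exp ((-Complex.I) * (y:ℂ)) with hS
  have HS : HasSum h (S + ((besselJ 0 θ : ℝ):ℂ)) := by
    have := bessel_hasSum θ hθ φ
    rwa [hycos] at this
  set P : ℂ := ((besselJ 0 θ : ℝ) : ℂ) + 2 * ∑ k ∈ Finset.Icc 1 m,
      (-Complex.I) ^ k * ((besselJ k θ : ℝ) : ℂ) *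
      (((Polynomial.Chebyshev.T ℝ k).eval (y / θ) : ℝ) : ℂ) with hP
  have hTk : ∀ k : ℕ, ((Polynomial.Chebyshev.T ℝ k).eval (y / θ) : ℝ) = Real.cos (k * φ) := by
    intro k
    rw [← hcos, Polynomial.Chebyshev.T_real_cos]
    norm_num
  have hrange : Finset.range (m+1) = insert 0 (Finset.Icc 1 m) := by
    ext x; simp [Finset.mem_range, Finset.mem_Icc]; omega
  have hPsum : ∑ k ∈ Finset.range (m+1), h k = P + ((besselJ 0 θ : ℝ):ℂ) := by
    rw [hrange, Finset.sum_insert (by simp)]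
    have h0 : h 0 = 2 * ((besselJ 0 θ : ℝ):ℂ) := by simp [hh]
    rw [h0, hP, Finset.mul_sum]
    have hsc : ∀ k ∈ Finset.Icc 1 m, h k = 2 * ((-Complex.I)^k * ((besselJ k θ : ℝ):ℂ)
        * (((Polynomial.Chebyshev.T ℝ k).eval (y / θ) : ℝ) : ℂ)) := by
      intro k _
      rw [hh, hTk k]
    rw [Finset.sum_congr rfl hsc]
    ring
  have e : S + ((besselJ 0 θ : ℝ):ℂ) = (S - P) + ∑ i ∈ Finset.range (m+1), h i := by
    rw [hPsum]; ring
  rw [e] at HS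
  have HT := (hasSum_nat_add_iff (m+1)).mpr HS
  have hle : ∀ n : ℕ, ‖h (n + (m+1))‖ ≤ 2 * |besselJ (m + 1 + n) θ| := by
    intro n
    have hidx : n + (m+1) = m + 1 + n := by omega
    rw [hh, hidx]
    simp only [norm_mul, norm_pow, norm_neg, Complex.norm_I, one_pow, one_mul,
      Complex.norm_real, Real.norm_eq_abs, Complex.norm_ofNat]
    have : |Real.cos ((m+1+n : ℕ) * φ)| ≤ 1 := Real.abs_cos_le_one _
    nlinarith [abs_nonneg (besselJ (m+1+n) θ), abs_nonneg (Real.cos ((m+1+n : ℕ) * φ))]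
  have hsum2 : Summable (fun n : ℕ => 2 * |besselJ (m + 1 + n) θ|) :=
    (besselJ_summable_shift θ hθ m).mul_left 2
  have hsumnorm : Summable (fun n : ℕ => ‖h (n + (m+1))‖) :=
    Summable.of_nonneg_of_le (fun n => norm_nonneg _) hle hsum2
  have key : ‖S - P‖ ≤ 2 * ∑' k : ℕ, |besselJ (m + 1 + k) θ| := by
    rw [← HT.tsum_eq]
    calc ‖∑' n, h (n + (m+1))‖ ≤ ∑' n, ‖h (n + (m+1))‖ := norm_tsum_le_tsum_norm hsumnorm
      _ ≤ ∑' n, 2 * |besselJ (m + 1 + n) θ| := Summable.tsum_le_tsum hle hsumnorm hsum2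
      _ = 2 * ∑' k : ℕ, |besselJ (m + 1 + k) θ| := tsum_mul_left
  calc ‖P - S‖ = ‖S - P‖ := by rw [norm_sub_rev]
    _ ≤ _ := key
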